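/- Let G be a group, H ≤ G a subgroup, X an H-set, and τ ∈ H an element of finite order. Regard Λ_H(τ) as a subgroup of Λ_G(τ) via the injective homomorphism [a, t] ↦ [a, t], and let Λ_H(τ) act on X^τ by [c, s]·x := c·x. Then the map C_G(τ) ×_{C_H(τ)} X^τ → Λ_G(τ) ×_{Λ_H(τ)} X^τ sending the class [a, x] to the class [[a, 0], x] is a well-defined bijection, where Λ_G(τ) ×_{Λ_H(τ)} X^τ denotes the quotient of Λ_G(τ) × X^τ by (αβ, x) ∼ (α, β·x) for β ∈ Λ_H(τ). -/

import Mathlib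

namespace QEC

variable {G : Type*} [Group G]

/-- The centralizer of `g` in `G`. -/
abbrev Centz (g : G) : Subgroup G := Subgroup.centralizer {g}

/-- `g` as an element of its own centralizer. -/
def gC (g : G) : Centz g :=
  ⟨g, by
    rw [Subgroup.mem_centralizer_iff]
    intro h hh
    rw [Set.mem_singleton_iff] at hh
    subst hh; rfl⟩

/-- The generator `(g, -1)` of `N_g` inside `C_G(g) × ℝ`. -/
def genN (g : G) : Centz g × Multiplicative ℝ := (gC g, Multiplicative.ofAdd (-1 : ℝ))

/-- The subgroup `N_g` of `C_G(g) × ℝ` generated by `(g, -1)`. -/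
def Ng (g : G) : Subgroup (Centz g × Multiplicative ℝ) := Subgroup.zpowers (genN g)

lemma genN_mem_center (g : G) :
    genN g ∈ Subgroup.center (Centz g × Multiplicative ℝ) := by
  rw [Subgroup.mem_center_iff]
  intro p
  have h1 : g * (p.1 : G) = (p.1 : G) * g :=
    Subgroup.mem_centralizer_iff.mp p.1.2 g (Set.mem_singleton g)
  exact Prod.ext (Subtype.ext h1.symm) (mul_comm _ _)

instance Ng_normal (g : G) : (Ng g).Normal := by
  constructor
  intro n hn x
  obtain ⟨k, rfl⟩ := Subgroup.mem_zpowers_iff.mp hn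
  have hcmt : Commute x (genN g) := Subgroup.mem_center_iff.mp (genN_mem_center g) x
  have h2 : x * genN g ^ k * x⁻¹ = genN g ^ k := by
    rw [(hcmt.zpow_right k).eq, mul_inv_cancel_right]
  rw [h2]
  exact Subgroup.zpow_mem _ (Subgroup.mem_zpowers _) k

/-- The group `Λ_G(g) = (C_G(g) × ℝ)/N_g`. -/
abbrev Lam (g : G) : Type _ := (Centz g × Multiplicative ℝ) ⧸ Ng g

/-- The class `[a, t]` in `Λ_G(g)`. -/
def lmk (g : G) (a : Centz g) (t : ℝ) : Lam g :=
  QuotientGroup.mk (a, Multiplicative.ofAdd t)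

/-- The canonical map `C_G(g) → Λ_G(g)`, `a ↦ [a, 0]`. -/
def inclC (g : G) : Centz g →* Lam g :=
  (QuotientGroup.mk' (Ng g)).comp (MonoidHom.inl (Centz g) (Multiplicative ℝ))

/-- The balanced-product relation on `Γ × X`: `(γ·ι(s), x) ∼ (γ, s • x)`. -/
def balSetoid (Γ : Type*) [Group Γ] {S : Type*} [Group S] (ι : S →* Γ)
    (X : Type*) [MulAction S X] : Setoid (Γ × X) where
  r p q := ∃ s : S, p.1 = q.1 * ι s ∧ q.2 = s • p.2
  iseqv := by
    constructor
    · intro p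
      exact ⟨1, by simp, by simp⟩
    · rintro p q ⟨s, h1, h2⟩
      refine ⟨s⁻¹, ?_, ?_⟩
      · rw [h1, map_inv, mul_assoc, mul_inv_cancel, mul_one]
      · rw [h2, inv_smul_smul]
    · rintro p q r ⟨s, h1, h2⟩ ⟨u, h3, h4⟩
      refine ⟨u * s, ?_, ?_⟩
      · rw [h1, h3, map_mul, mul_assoc]
      · rw [h4, h2, mul_smul]

/-- The balanced product `Γ ×_S X` with respect to `ι : S → Γ` and an `S`-action on `X`. -/
def Bal (Γ : Type*) [Group Γ] {S : Type*} [Group S] (ι : S →* Γ)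
    (X : Type*) [MulAction S X] : Type _ :=
  Quotient (balSetoid Γ ι X)

/-- The class of `(γ, x)` in the balanced product. -/
def balMk (Γ : Type*) [Group Γ] {S : Type*} [Group S] (ι : S →* Γ)
    (X : Type*) [MulAction S X] : Γ × X → Bal Γ ι X :=
  Quotient.mk (balSetoid Γ ι X)

/-- Left translation by `g : Γ` on the balanced product. -/
def balSmul {Γ : Type*} [Group Γ] {S : Type*} [Group S] {ι : S →* Γ}
    {X : Type*} [MulAction S X] (g : Γ) : Bal Γ ι X → Bal Γ ι X :=
  Quotient.map (fun p => (g * p.1, p.2)) (by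
    rintro p q ⟨s, h1, h2⟩
    exact ⟨s, by show g * p.1 = g * q.1 * ι s; rw [h1, mul_assoc], h2⟩)

/-- The fixed points `X^τ` of `τ ∈ H` acting on the `H`-set `X`. -/
abbrev Xfix {G : Type*} [Group G] (H : Subgroup G) (X : Type*) [MulAction H X]
    (τ : H) : Type _ :=
  {x : X // τ • x = x}

/-- `C_H(τ)` viewed as the subgroup of `C_G(τ)` of elements lying in `H`. -/
def CHsub {G : Type*} [Group G] (H : Subgroup G) (τ : H) :
    Subgroup (Centz ((τ : G))) :=
  H.subgroupOf (Centz ((τ : G)))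

/-- An element of `C_H(τ)`, as an element of `H`. -/
def CHsub.toH {G : Type*} [Group G] {H : Subgroup G} {τ : H}
    (s : CHsub H τ) : H :=
  ⟨((s : Centz ((τ : G))) : G), (Subgroup.mem_subgroupOf).mp s.2⟩

lemma CHsub.toH_comm {G : Type*} [Group G] {H : Subgroup G} {τ : H}
    (s : CHsub H τ) : τ * CHsub.toH s = CHsub.toH s * τ := by
  apply Subtype.ext
  exact Subgroup.mem_centralizer_iff.mp (s : Centz ((τ : G))).2 (τ : G) (Set.mem_singleton _)

instance fixMulAction {G : Type*} [Group G] (H : Subgroup G) (X : Type*) [MulAction H X]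
    (τ : H) : MulAction (CHsub H τ) (Xfix H X τ) where
  smul s x := ⟨CHsub.toH s • x.1, by
    calc (τ : H) • (CHsub.toH s • x.1) = (τ * CHsub.toH s) • x.1 := (mul_smul _ _ _).symm
      _ = (CHsub.toH s * τ) • x.1 := by rw [CHsub.toH_comm]
      _ = CHsub.toH s • ((τ : H) • x.1) := mul_smul _ _ _
      _ = CHsub.toH s • x.1 := by rw [x.2]⟩
  one_smul x := Subtype.ext (one_smul H x.1)
  mul_smul s u x := Subtype.ext (mul_smul (CHsub.toH s) (CHsub.toH u) x.1)

/-- A group homomorphism `φ : G → H` maps `C_G(τ)` into `C_H(φ(τ))`. -/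
def centMap {G H : Type*} [Group G] [Group H] (φ : G →* H) (τ : G) :
    Centz τ →* Centz (φ τ) :=
  (φ.comp (Centz τ).subtype).codRestrict _ (fun a => by
    rw [Subgroup.mem_centralizer_iff]
    intro y hy
    rw [Set.mem_singleton_iff] at hy
    subst hy
    have h := Subgroup.mem_centralizer_iff.mp a.2 τ (Set.mem_singleton τ)
    show φ τ * φ (a : G) = φ (a : G) * φ τ
    rw [← map_mul, ← map_mul, h])

/-- The induced homomorphism `C_G(τ) × ℝ → C_H(φ(τ)) × ℝ`. -/
def CRmap {G H : Type*} [Group G] [Group H] (φ : G →* H) (τ : G) :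
    Centz τ × Multiplicative ℝ →* Centz (φ τ) × Multiplicative ℝ :=
  (centMap φ τ).prodMap (MonoidHom.id (Multiplicative ℝ))

lemma CRmap_genN {G H : Type*} [Group G] [Group H] (φ : G →* H) (τ : G) :
    CRmap φ τ (genN τ) = genN (φ τ) := by
  apply Prod.ext
  · exact Subtype.ext rfl
  · rfl

/-- The induced homomorphism `φ_Λ : Λ_G(τ) → Λ_H(φ(τ))`, `[a, t] ↦ [φ(a), t]`. -/
def LamMap {G H : Type*} [Group G] [Group H] (φ : G →* H) (τ : G) :
    Lam τ →* Lam (φ τ) :=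
  QuotientGroup.map (Ng τ) (Ng (φ τ)) (CRmap φ τ) (by
    intro x hx
    obtain ⟨k, rfl⟩ := Subgroup.mem_zpowers_iff.mp hx
    rw [Subgroup.mem_comap, map_zpow, CRmap_genN]
    exact Subgroup.zpow_mem _ (Subgroup.mem_zpowers _) k)

instance lamFixMulAction {G : Type*} [Group G] (H : Subgroup G) (X : Type*)
    [MulAction H X] (τ : H) : MulAction (Lam (G := H) τ) (Xfix H X τ) where
  smul q x := Quotient.liftOn' q
    (fun p => (⟨((p.1 : Centz (G := H) τ) : H) • x.1, by
      have hc : τ * (p.1 : H) = (p.1 : H) * τ :=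
        Subgroup.mem_centralizer_iff.mp p.1.2 τ (Set.mem_singleton _)
      calc τ • ((p.1 : H) • x.1) = (τ * (p.1 : H)) • x.1 := (mul_smul _ _ _).symm
        _ = ((p.1 : H) * τ) • x.1 := by rw [hc]
        _ = (p.1 : H) • (τ • x.1) := mul_smul _ _ _
        _ = (p.1 : H) • x.1 := by rw [x.2]⟩ : Xfix H X τ))
    (by
      intro p₁ p₂ hp
      rw [QuotientGroup.leftRel_apply] at hp
      obtain ⟨k, hk⟩ := Subgroup.mem_zpowers_iff.mp hp
      have hp₂ : p₂ = p₁ * genN τ ^ k := by rw [hk, mul_inv_cancel_left]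
      have h1 : (genN τ ^ k).1 = gC τ ^ k := map_zpow (MonoidHom.fst _ _) (genN τ) k
      have hfst : (p₂.1 : H) = (p₁.1 : H) * (τ : H) ^ k := by
        rw [hp₂, Prod.fst_mul, h1, Subgroup.coe_mul, SubgroupClass.coe_zpow]
        rfl
      apply Subtype.ext
      show (p₁.1 : H) • x.1 = (p₂.1 : H) • x.1
      rw [hfst, mul_smul]
      have hst : τ ∈ MulAction.stabilizer H x.1 := x.2
      have h2 : (τ : H) ^ k • x.1 = x.1 :=
        MulAction.mem_stabilizer_iff.mp (Subgroup.zpow_mem _ hst k)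
      rw [h2])
  one_smul x := Subtype.ext (one_smul H x.1)
  mul_smul q q' x := by
    induction q using Quotient.inductionOn' with
    | h p =>
      induction q' using Quotient.inductionOn' with
      | h p' => exact Subtype.ext (mul_smul ((p.1 : Centz (G := H) τ) : H) _ _)

lemma CHsub.toH_mem_centz {G : Type*} [Group G] {H : Subgroup G} {τ : H}
    (s : CHsub H τ) : CHsub.toH s ∈ Centz (G := H) τ := by
  rw [Subgroup.mem_centralizer_iff]
  intro h hh
  rw [Set.mem_singleton_iff] at hh
  subst hh
  exact CHsub.toH_comm s

lemma lmk_mul {G : Type*} [Group G] (g : G) (a b : Centz g) (t u : ℝ) :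
    lmk g a t * lmk g b u = lmk g (a * b) (t + u) := rfl

/-- For `H ≤ G`, an `H`-set `X` and `τ ∈ H` of finite order, regard
`Λ_H(τ)` inside `Λ_G(τ)` via `[a, t] ↦ [a, t]`, acting on `X^τ` by `[c, s] • x = c • x`.
Then `C_G(τ) ×_{C_H(τ)} X^τ → Λ_G(τ) ×_{Λ_H(τ)} X^τ`, `[a, x] ↦ [[a, 0], x]`,
is a well-defined bijection. -/
theorem statement15 {G : Type*} [Group G] (H : Subgroup G) (X : Type*) [MulAction H X]
    (τ : H) (hτ : IsOfFinOrder τ) :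
    ∃ f : Bal (Centz ((τ : G))) (CHsub H τ).subtype (Xfix H X τ)
        → Bal (Lam ((τ : G))) (LamMap H.subtype τ) (Xfix H X τ),
      (∀ (a : Centz ((τ : G))) (x : Xfix H X τ),
        f (balMk (Centz ((τ : G))) (CHsub H τ).subtype (Xfix H X τ) (a, x))
          = balMk (Lam ((τ : G))) (LamMap H.subtype τ) (Xfix H X τ) (lmk ((τ : G)) a 0, x))
      ∧ Function.Bijective f := by
  classical
  have hresp : ∀ p q : Centz ((τ : G)) × Xfix H X τ,
      (balSetoid (Centz ((τ : G))) (CHsub H τ).subtype (Xfix H X τ)).r p q →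
      (balSetoid (Lam ((τ : G))) (LamMap H.subtype τ) (Xfix H X τ)).r
        (lmk ((τ : G)) p.1 0, p.2) (lmk ((τ : G)) q.1 0, q.2) := by
    rintro p q ⟨s, h1, h2⟩
    refine ⟨lmk (G := H) τ ⟨CHsub.toH s, CHsub.toH_mem_centz s⟩ 0, ?_, ?_⟩
    · have hce : (CHsub H τ).subtype s
          = centMap H.subtype τ ⟨CHsub.toH s, CHsub.toH_mem_centz s⟩ := Subtype.ext rfl
      have key : lmk ((τ : G)) q.1 0 *
          lmk ((τ : G)) (centMap H.subtype τ ⟨CHsub.toH s, CHsub.toH_mem_centz s⟩) 0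
          = lmk ((τ : G)) p.1 0 := by
        erw [lmk_mul]
        rw [add_zero, ← hce, ← h1]
      exact key.symm
    · exact Subtype.ext (congrArg Subtype.val h2)
  refine ⟨Quotient.map _ hresp, fun a x => rfl, ?_, ?_⟩
  · -- injectivity
    intro u v huv
    induction u using Quotient.inductionOn with
    | h p =>
    induction v using Quotient.inductionOn with
    | h q =>
    obtain ⟨β, h1, h2⟩ := Quotient.exact huv
    obtain ⟨z, rfl⟩ := QuotientGroup.mk_surjective β
    obtain ⟨c, t⟩ := z
    obtain ⟨c', hc'⟩ : ∃ c' : Centz ((τ : G)), c' = centMap H.subtype τ c :=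
      ⟨centMap H.subtype τ c, rfl⟩
    have h1' : lmk ((τ : G)) p.1 0
        = lmk ((τ : G)) (q.1 * c') (0 + Multiplicative.toAdd t) := by
      rw [← lmk_mul, hc']
      exact h1
    have hmem : ((p.1, Multiplicative.ofAdd (0 : ℝ)))⁻¹ *
        (q.1 * c', Multiplicative.ofAdd (0 + Multiplicative.toAdd t)) ∈ Ng ((τ : G)) :=
      QuotientGroup.eq.mp h1'
    obtain ⟨k, hk⟩ := Subgroup.mem_zpowers_iff.mp hmem
    have hg : (genN ((τ : G)) ^ k).1 = gC ((τ : G)) ^ k :=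
      map_zpow (MonoidHom.fst _ _) (genN ((τ : G))) k
    have hfst := congrArg Prod.fst hk
    rw [hg] at hfst
    simp only [Prod.fst_mul, Prod.fst_inv] at hfst
    have hp1 : p.1 = q.1 * (c' * (gC ((τ : G)) ^ k)⁻¹) := by
      rw [hfst]
      group
    have hmemH : ((c' * (gC ((τ : G)) ^ k)⁻¹ : Centz ((τ : G))) : G) ∈ H := by
      simp only [Subgroup.coe_mul, InvMemClass.coe_inv, SubgroupClass.coe_zpow]
      refine mul_mem ?_ (inv_mem (Subgroup.zpow_mem H τ.2 k))
      rw [hc']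
      exact SetLike.coe_mem ((c : Centz (G := H) τ) : H)
    set s : CHsub H τ := ⟨c' * (gC ((τ : G)) ^ k)⁻¹,
      Subgroup.mem_subgroupOf.mpr hmemH⟩ with hs
    have htoH : CHsub.toH s = ((c : Centz (G := H) τ) : H) * (τ ^ k)⁻¹ := by
      apply Subtype.ext
      show ((c' * (gC ((τ : G)) ^ k)⁻¹ : Centz ((τ : G))) : G)
        = ((((c : Centz (G := H) τ) : H) * (τ ^ k)⁻¹ : H) : G)
      rw [hc']
      simp only [Subgroup.coe_mul, InvMemClass.coe_inv, SubgroupClass.coe_zpow]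
      rfl
    apply Quotient.sound
    refine ⟨s, hp1, ?_⟩
    apply Subtype.ext
    show q.2.1 = CHsub.toH s • p.2.1
    rw [htoH, mul_smul]
    have hst : τ ∈ MulAction.stabilizer H p.2.1 := p.2.2
    have hstab : (τ ^ k : H)⁻¹ • p.2.1 = p.2.1 :=
      MulAction.mem_stabilizer_iff.mp (inv_mem (Subgroup.zpow_mem _ hst k))
    rw [hstab]
    exact congrArg Subtype.val h2
  · -- surjectivity
    intro u
    induction u using Quotient.inductionOn with
    | h p =>
    obtain ⟨α, x⟩ := p
    obtain ⟨z, rfl⟩ := QuotientGroup.mk_surjective α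
    obtain ⟨a, t⟩ := z
    refine ⟨Quotient.mk _ (a, x), ?_⟩
    show Quotient.mk _ (lmk ((τ : G)) a 0, x)
      = Quotient.mk _ ((QuotientGroup.mk (a, t) : Lam ((τ : G))), x)
    apply Quotient.sound
    refine ⟨lmk (G := H) τ 1 (-(Multiplicative.toAdd t)), ?_,
      Subtype.ext (one_smul H x.1).symm⟩
    have key : (QuotientGroup.mk (a, t) : Lam ((τ : G))) *
        lmk ((τ : G)) (centMap H.subtype τ 1) (-(Multiplicative.toAdd t))
        = lmk ((τ : G)) a 0 := by
      have hm : (QuotientGroup.mk (a, t) : Lam ((τ : G)))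
          = lmk ((τ : G)) a (Multiplicative.toAdd t) := rfl
      rw [hm]
      erw [lmk_mul, map_one, mul_one]
      rw [add_neg_cancel]
    exact key.symm

end QEC
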